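/- For every real number a > 0, the sum over all natural numbers k with k ≥ 3a of a^k / k! is at most exp(−a/4); that is, Σ_{k ∈ ℕ, k ≥ 3a} a^k/k! ≤ exp(−a/4). -/
import Mathlib

lemma log_three_ge : (13:ℝ)/12 ≤ Real.log 3 := by
  rw [Real.le_log_iff_exp_le (by norm_num)]
  have h12 : Real.exp (13/12) ^ 12 = Real.exp 13 := by
    rw [← Real.exp_nat_mul]; norm_num
  have h13 : Real.exp 13 = Real.exp 1 ^ 13 := by
    rw [← Real.exp_nat_mul]; norm_num
  have he : Real.exp 1 < 2.7182818286 := Real.exp_one_lt_d9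
  have : Real.exp 13 ≤ (3:ℝ) ^ 12 := by
    rw [h13]
    calc Real.exp 1 ^ 13 ≤ (2.7182818286:ℝ) ^ 13 := by
          exact pow_le_pow_left₀ (Real.exp_pos 1).le he.le 13
      _ ≤ (3:ℝ) ^ 12 := by norm_num
  have := h12 ▸ this
  exact le_of_pow_le_pow_left₀ (by norm_num) (by norm_num) this

lemma real_exp_tsum (x : ℝ) : ∑' n : ℕ, x ^ n / (n.factorial : ℝ) = Real.exp x := by
  rw [Real.exp_eq_exp_ℝ, NormedSpace.exp_eq_tsum_div]

/-- Tail bound for the exponential power series: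
`∑_{k ≥ 3a} a^k / k! ≤ exp(-a/4)` for every real `a > 0`. -/
theorem exp_series_tail_bound (a : ℝ) (ha : 0 < a) :
    ∑' k : ℕ, (if 3 * a ≤ (k : ℝ) then a ^ k / (k.factorial : ℝ) else 0) ≤
      Real.exp (-a / 4) := by
  set g : ℕ → ℝ := fun k => (3*a) ^ k / (k.factorial : ℝ) * Real.exp (-(3*a) * Real.log 3)
    with hg
  have hsg : Summable g := (Real.summable_pow_div_factorial (3*a)).mul_right _
  have hpt : ∀ k : ℕ, (if 3 * a ≤ (k : ℝ) then a ^ k / (k.factorial : ℝ) else 0) ≤ g k := by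
    intro k
    by_cases hk : 3 * a ≤ (k : ℝ)
    · simp only [if_pos hk, hg]
      have hfac : (0:ℝ) < (k.factorial : ℝ) := by positivity
      rw [div_mul_eq_mul_div, div_le_div_iff₀ hfac hfac]
      have key : a ^ k ≤ (3*a) ^ k * Real.exp (-(3*a) * Real.log 3) := by
        have h1 : ((3:ℝ)*a) ^ k = 3 ^ k * a ^ k := mul_pow 3 a k
        have h2 : Real.exp (-(3*a) * Real.log 3) = (3:ℝ) ^ (-(3*a)) := by
          rw [Real.rpow_def_of_pos (by norm_num), mul_comm]
        have h3 : ((3:ℝ)) ^ (-(k:ℝ)) ≤ (3:ℝ) ^ (-(3*a)) :=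
          Real.rpow_le_rpow_of_exponent_le (by norm_num) (by linarith)
        have h4 : ((3:ℝ)) ^ (-(k:ℝ)) = ((3:ℝ) ^ k)⁻¹ := by
          rw [Real.rpow_neg (by norm_num), Real.rpow_natCast]
        have h5 : (0:ℝ) < 3 ^ k := by positivity
        calc a ^ k = 3 ^ k * a ^ k * ((3:ℝ) ^ k)⁻¹ := by field_simp
          _ ≤ 3 ^ k * a ^ k * (3:ℝ) ^ (-(3*a)) := by
              apply mul_le_mul_of_nonneg_left (h4 ▸ h3); positivity
          _ = (3*a) ^ k * Real.exp (-(3*a) * Real.log 3) := by rw [h1, h2]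
      exact mul_le_mul_of_nonneg_right key hfac.le
    · simp only [if_neg hk, hg]
      positivity
  have hsum : ∑' k : ℕ, (if 3 * a ≤ (k : ℝ) then a ^ k / (k.factorial : ℝ) else 0)
      ≤ ∑' k, g k := by
    refine Summable.tsum_le_tsum hpt ?_ hsg
    apply hsg.of_nonneg_of_le _ hpt
    intro k; positivity
  refine hsum.trans ?_
  have : ∑' k, g k = Real.exp (3*a) * Real.exp (-(3*a) * Real.log 3) := by
    rw [hg, tsum_mul_right, real_exp_tsum]
  rw [this, ← Real.exp_add, Real.exp_le_exp]
  have hl := log_three_ge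
  nlinarith
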